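/- (Uniqueness for perpetuities, used in the proof) Let (A,B) be a pair of random variables with A taking values in [0,1), P(A=1) < 1, E[log A] < 0 (interpreting log 0 = -∞), and E[log^+ |B|] < ∞. Then the distributional equation M =_d A M + B, where M is independent of (A,B), has at most one solution in distribution. -/

import Mathlib

open Filter Set MeasureTheory ProbabilityTheory
open scoped ENNReal NNReal Topology

/-- `ν` is a solution in distribution of the perpetuity equation `M =_d A M + B`
with `M` independent of `(A,B)`, where `(A,B)` has the prescribed law. -/
def IsPerpetuitySolution {Ω : Type*} [MeasurableSpace Ω] (μ : Measure Ω)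
    (A B : Ω → ℝ) (ν : Measure ℝ) : Prop :=
  ∃ (Ω' : Type) (_ : MeasurableSpace Ω') (μ' : Measure Ω'),
    IsProbabilityMeasure μ' ∧
    ∃ (A' B' M : Ω' → ℝ),
      Measurable A' ∧ Measurable B' ∧ Measurable M ∧
      Measure.map (fun ω => (A' ω, B' ω)) μ' = Measure.map (fun ω => (A ω, B ω)) μ ∧
      Measure.map M μ' = ν ∧
      IndepFun M (fun ω => (A' ω, B' ω)) μ' ∧
      Measure.map (fun ω => A' ω * M ω + B' ω) μ' = ν

namespace PerpetuityAux


variable {Ω : Type*} [MeasurableSpace Ω]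

lemma integral_pi_prod_pow (μ : Measure Ω) [IsProbabilityMeasure μ] (f : Ω → ℝ) (n : ℕ) :
    ∫ v : Fin n → Ω, ∏ i, f (v i) ∂(Measure.pi fun _ => μ) = (∫ ω, f ω ∂μ) ^ n := by
  letI : MeasureSpace Ω := { volume := μ }
  haveI : SigmaFinite (volume : Measure Ω) := inferInstanceAs (SigmaFinite μ)
  have h := MeasureTheory.integral_fintype_prod_volume_eq_pow (𝕜 := ℝ) (ι := Fin n) f
  rw [show (Measure.pi fun _ : Fin n => μ) = (volume : Measure (Fin n → Ω)) from rfl]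
  rw [Fintype.card_fin] at h; exact h

lemma tendsto_pi_prod_measure (μ : Measure Ω) [IsProbabilityMeasure μ]
    (A : Ω → ℝ) (hA : Measurable A) (hA01 : ∀ ω, A ω ∈ Set.Ico (0:ℝ) 1)
    (hlogA : 0 < μ {ω | A ω = 0} ∨ ∫ ω, Real.log (A ω) ∂μ < 0)
    {δ : ℝ} (hδ : 0 < δ) :
    Tendsto (fun n => (Measure.pi fun _ : Fin n => μ) {v | δ < ∏ i, A (v i)}) atTop (𝓝 0) := by
  have hAnn : ∀ ω, 0 ≤ A ω := fun ω => (hA01 ω).1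
  have hlognp : ∀ ω, Real.log (A ω) ≤ 0 := by
    intro ω
    rcases eq_or_lt_of_le (hAnn ω) with h | h
    · simp [← h]
    · exact Real.log_nonpos (hAnn ω) (hA01 ω).2.le
  rcases hlogA with hp | hm
  · -- case P(A = 0) > 0
    set c : ℝ≥0∞ := μ {ω | A ω ≠ 0} with hc
    have hmeas0 : MeasurableSet {ω | A ω = 0} := hA (measurableSet_singleton 0)
    have hclt : c < 1 := by
      have : {ω | A ω ≠ 0} = {ω | A ω = 0}ᶜ := rfl
      rw [hc, this, measure_compl hmeas0 (measure_ne_top _ _), measure_univ]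
      exact ENNReal.sub_lt_self ENNReal.one_ne_top one_ne_zero hp.ne'
    have hcne : c ≠ ∞ := (hclt.trans ENNReal.one_lt_top).ne
    have hle : ∀ n, (Measure.pi fun _ : Fin n => μ) {v | δ < ∏ i, A (v i)} ≤ c ^ n := by
      intro n
      have hsub : {v : Fin n → Ω | δ < ∏ i, A (v i)} ⊆
          Set.pi Set.univ (fun _ : Fin n => {ω | A ω ≠ 0}) := by
        intro v hv i _
        simp only [Set.mem_setOf_eq] at hv
        intro h0
        have : (∏ i, A (v i)) = 0 := Finset.prod_eq_zero (Finset.mem_univ i) h0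
        rw [this] at hv
        exact absurd hv (not_lt.mpr hδ.le)
      calc (Measure.pi fun _ : Fin n => μ) {v | δ < ∏ i, A (v i)}
          ≤ (Measure.pi fun _ : Fin n => μ) (Set.pi Set.univ fun _ => {ω | A ω ≠ 0}) :=
            measure_mono hsub
        _ = ∏ _i : Fin n, c := Measure.pi_pi _ _
        _ = c ^ n := by simp
    have hpow : Tendsto (fun n => c ^ n) atTop (𝓝 0) := by
      have h1 : c.toReal < 1 := by
        rw [show (1:ℝ) = (1:ℝ≥0∞).toReal by simp]
        exact (ENNReal.toReal_lt_toReal hcne ENNReal.one_ne_top).mpr hclt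
      have hr : Tendsto (fun n => c.toReal ^ n) atTop (𝓝 0) :=
        tendsto_pow_atTop_nhds_zero_of_lt_one ENNReal.toReal_nonneg h1
      have ho : Tendsto (fun n => ENNReal.ofReal (c.toReal ^ n)) atTop (𝓝 (ENNReal.ofReal 0)) :=
        ENNReal.tendsto_ofReal hr
      have hco : ∀ n, c ^ n = ENNReal.ofReal (c.toReal ^ n) := by
        intro n
        rw [ENNReal.ofReal_pow ENNReal.toReal_nonneg, ENNReal.ofReal_toReal hcne]
      simpa [hco] using ho
    exact tendsto_of_tendsto_of_tendsto_of_le_of_le tendsto_const_nhds hpow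
      (fun n => zero_le) hle
  · -- case E[log A] < 0
    set m : ℝ := ∫ ω, Real.log (A ω) ∂μ with hmdef
    have hInt : Integrable (fun ω => Real.log (A ω)) μ := by
      by_contra h
      have h0 : m = 0 := by rw [hmdef]; exact integral_undef h
      rw [h0] at hm
      exact absurd hm (lt_irrefl 0)
    have hlogmeas : Measurable fun ω => Real.log (A ω) := Real.measurable_log.comp hA
    -- truncated log
    have htY : Tendsto (fun K : ℕ => ∫ ω, max (Real.log (A ω)) (-(K:ℝ)) ∂μ) atTop (𝓝 m) := by
      refine tendsto_integral_of_dominated_convergence (fun ω => |Real.log (A ω)|)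
        (fun K => ((hlogmeas.max measurable_const).aestronglyMeasurable)) hInt.abs
        (fun K => Filter.Eventually.of_forall fun ω => ?_)
        (Filter.Eventually.of_forall fun ω => ?_)
      · rw [Real.norm_eq_abs, abs_le]
        constructor
        · exact le_trans (neg_abs_le _) (le_max_left _ _)
        · exact le_trans (max_le (hlognp ω) (neg_nonpos.mpr (Nat.cast_nonneg K))) (abs_nonneg _)
      · have hev : (fun K : ℕ => max (Real.log (A ω)) (-(K:ℝ))) =ᶠ[atTop]
            (fun _ => Real.log (A ω)) := by
          filter_upwards [eventually_ge_atTop ⌈-(Real.log (A ω))⌉₊] with K hK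
          have h1 : -(Real.log (A ω)) ≤ (K : ℝ) :=
            le_trans (Nat.le_ceil _) (by exact_mod_cast hK)
          exact max_eq_left (by linarith)
        exact Filter.Tendsto.congr' (Filter.EventuallyEq.symm hev) tendsto_const_nhds
    have hhalf : m < m / 2 := by linarith
    obtain ⟨K, hK⟩ := (htY.eventually_lt_const hhalf).exists
    set g : Ω → ℝ := fun ω => max (Real.log (A ω)) (-(K:ℝ)) with hgdef
    set mK : ℝ := ∫ ω, g ω ∂μ with hmKdef
    have hmKneg : mK < 0 := lt_trans hK (by linarith)
    have hgmeas : Measurable g := hlogmeas.max measurable_const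
    set Kr : ℝ := (K:ℝ) + 1 with hKr
    have hKrpos : (0:ℝ) < Kr := by positivity
    have hgub : ∀ ω, g ω ≤ 0 := fun ω => max_le (hlognp ω) (neg_nonpos.mpr (Nat.cast_nonneg K))
    have hgabs : ∀ ω, |g ω| ≤ Kr := by
      intro ω
      rw [abs_le]
      refine ⟨le_trans (by simp [hKr]) (le_max_right _ _), le_trans (hgub ω) hKrpos.le⟩
    have hglb : ∀ ω, g ω ≥ Real.log (A ω) := fun ω => le_max_left _ _
    have hgInt : Integrable g μ :=
      (integrable_const Kr).mono' hgmeas.aestronglyMeasurable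
        (Filter.Eventually.of_forall fun ω => by
          rw [Real.norm_eq_abs]; exact hgabs ω)
    -- choose t
    set t : ℝ := min (1 / Kr) (|mK| / (2 * Kr ^ 2)) with htdef
    have hmKabs : 0 < |mK| := abs_pos.mpr hmKneg.ne
    have ht0 : 0 < t := lt_min (by positivity) (by positivity)
    have htK : t * Kr ≤ 1 := by
      have : t ≤ 1 / Kr := min_le_left _ _
      calc t * Kr ≤ (1 / Kr) * Kr := mul_le_mul_of_nonneg_right this hKrpos.le
        _ = 1 := by field_simp
    have htm : t * Kr ^ 2 ≤ |mK| / 2 := by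
      have h1 : t ≤ |mK| / (2 * Kr ^ 2) := min_le_right _ _
      have h2 : (0:ℝ) < Kr ^ 2 := by positivity
      calc t * Kr ^ 2 ≤ (|mK| / (2 * Kr ^ 2)) * Kr ^ 2 :=
            mul_le_mul_of_nonneg_right h1 h2.le
        _ = |mK| / 2 := by field_simp
    -- exponential moment
    set γ : ℝ := ∫ ω, Real.exp (t * g ω) ∂μ with hγdef
    have hexp_le : ∀ ω, Real.exp (t * g ω) ≤ 1 + t * g ω + (3/4) * (t * Kr) ^ 2 := by
      intro ω
      have hxabs : |t * g ω| ≤ t * Kr := by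
        rw [abs_mul, abs_of_nonneg ht0.le]
        exact mul_le_mul_of_nonneg_left (hgabs ω) ht0.le
      have hx1 : |t * g ω| ≤ 1 := le_trans hxabs htK
      have hb := Real.exp_bound hx1 (n := 2) (by norm_num)
      have hsum : (∑ i ∈ Finset.range 2, (t * g ω) ^ i / i.factorial) = 1 + t * g ω := by
        simp [Finset.sum_range_succ, Nat.factorial]
      rw [hsum] at hb
      have h34 : ((2:ℕ).succ / ((2:ℕ).factorial * (2:ℕ)) : ℝ) = 3 / 4 := by
        norm_num [Nat.factorial]
      rw [h34] at hb
      have h1 := (abs_sub_le_iff.mp hb).1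
      have h2 : |t * g ω| ^ 2 ≤ (t * Kr) ^ 2 :=
        sq_le_sq' (by linarith [abs_nonneg (t * g ω), mul_nonneg ht0.le hKrpos.le]) hxabs
      have h1' : Real.exp (t * g ω) ≤ 1 + t * g ω + |t * g ω| ^ 2 * (3/4) := by linarith
      have h2' : |t * g ω| ^ 2 * (3/4 : ℝ) ≤ (t * Kr) ^ 2 * (3/4) :=
        mul_le_mul_of_nonneg_right h2 (by norm_num)
      calc Real.exp (t * g ω) ≤ 1 + t * g ω + |t * g ω| ^ 2 * (3/4) := h1'
        _ ≤ 1 + t * g ω + (t * Kr) ^ 2 * (3/4) := by linarith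
        _ = 1 + t * g ω + 3/4 * (t * Kr) ^ 2 := by ring
    have hexp_pos : ∀ ω, (0:ℝ) ≤ Real.exp (t * g ω) := fun ω => (Real.exp_pos _).le
    have hexp_le_one : ∀ ω, Real.exp (t * g ω) ≤ 1 := by
      intro ω
      rw [show (1:ℝ) = Real.exp 0 from (Real.exp_zero).symm]
      exact Real.exp_le_exp.mpr (mul_nonpos_of_nonneg_of_nonpos ht0.le (hgub ω))
    have hexpmeas : Measurable fun ω => Real.exp (t * g ω) :=
      Real.measurable_exp.comp (hgmeas.const_mul t)
    have hexpInt : Integrable (fun ω => Real.exp (t * g ω)) μ :=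
      (integrable_const (1:ℝ)).mono' hexpmeas.aestronglyMeasurable
        (Filter.Eventually.of_forall fun ω => by
          rw [Real.norm_eq_abs, abs_of_nonneg (hexp_pos ω)]; exact hexp_le_one ω)
    have hγle : γ ≤ 1 + t * mK + (3/4) * (t * Kr) ^ 2 := by
      have hInt2 : Integrable (fun ω => 1 + t * g ω + (3/4) * (t * Kr) ^ 2) μ := by
        exact (((integrable_const (1:ℝ)).add (hgInt.const_mul t)).add (integrable_const _))
      calc γ ≤ ∫ ω, (1 + t * g ω + (3/4) * (t * Kr) ^ 2) ∂μ :=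
            integral_mono hexpInt hInt2 hexp_le
        _ = 1 + t * mK + (3/4) * (t * Kr) ^ 2 := by
            have i1 : Integrable (fun ω => t * g ω) μ := by exact hgInt.const_mul t
            have i2 : Integrable (fun ω => 1 + t * g ω) μ := by
              exact (integrable_const (1:ℝ)).add i1
            rw [integral_add i2 (integrable_const _), integral_add (integrable_const (1:ℝ)) i1,
              integral_const, integral_const_mul, integral_const]
            simp [measure_univ]; exact Or.inl rfl
    have hγlt : γ < 1 := by
      have habs : |mK| = -mK := abs_of_neg hmKneg
      have h1 : (3/4) * (t * Kr) ^ 2 ≤ (3/4) * (t * (|mK| / 2)) := by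
        have : (t * Kr) ^ 2 = t * (t * Kr ^ 2) := by ring
        rw [this]
        have := mul_le_mul_of_nonneg_left htm ht0.le
        nlinarith
      nlinarith [hγle]
    have hγ0 : 0 ≤ γ := integral_nonneg hexp_pos
    -- Chernoff bound for each n
    set ε₀ : ℝ := Real.exp (t * Real.log δ) with hε₀
    have hε₀pos : 0 < ε₀ := Real.exp_pos _
    have hbound : ∀ n : ℕ,
        (Measure.pi fun _ : Fin n => μ) {v | δ < ∏ i, A (v i)} ≤
          ENNReal.ofReal (γ ^ n / ε₀) := by
      intro n
      set π := (Measure.pi fun _ : Fin n => μ) with hπ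
      haveI : IsProbabilityMeasure π := by rw [hπ]; infer_instance
      set F : (Fin n → Ω) → ℝ := fun v => ∏ i, Real.exp (t * g (v i)) with hF
      have hFmeas : Measurable F :=
        Finset.measurable_prod _ fun i _ => hexpmeas.comp (measurable_pi_apply i)
      have hFnn : ∀ v, 0 ≤ F v := fun v => Finset.prod_nonneg fun i _ => hexp_pos _
      have hFle1 : ∀ v, F v ≤ 1 :=
        fun v => Finset.prod_le_one (fun i _ => hexp_pos _) (fun i _ => hexp_le_one _)
      have hFInt : Integrable F π :=
        (integrable_const (1:ℝ)).mono' hFmeas.aestronglyMeasurable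
          (Filter.Eventually.of_forall fun v => by
            rw [Real.norm_eq_abs, abs_of_nonneg (hFnn v)]; exact hFle1 v)
      have hFint_eq : ∫ v, F v ∂π = γ ^ n :=
        integral_pi_prod_pow μ (fun ω => Real.exp (t * g ω)) n
      have hsub : {v | δ < ∏ i, A (v i)} ⊆ {v | ε₀ ≤ F v} := by
        intro v hv
        simp only [Set.mem_setOf_eq] at hv ⊢
        have hprodpos : 0 < ∏ i, A (v i) := lt_trans hδ hv
        have hne : ∀ i ∈ Finset.univ, A (v i) ≠ 0 := by
          intro i _
          intro h0
          rw [Finset.prod_eq_zero (Finset.mem_univ i) h0] at hprodpos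
          exact lt_irrefl 0 hprodpos
        have hlog : Real.log δ < ∑ i, Real.log (A (v i)) := by
          rw [← Real.log_prod hne]
          exact Real.log_lt_log hδ hv
        have hsum : ∑ i, Real.log (A (v i)) ≤ ∑ i, g (v i) :=
          Finset.sum_le_sum fun i _ => hglb _
        have : t * Real.log δ ≤ t * ∑ i, g (v i) :=
          mul_le_mul_of_nonneg_left (le_trans hlog.le hsum) ht0.le
        calc ε₀ ≤ Real.exp (t * ∑ i, g (v i)) := Real.exp_le_exp.mpr this
          _ = F v := by
            rw [Finset.mul_sum, Real.exp_sum]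
      have hmar := mul_meas_ge_le_integral_of_nonneg
        (Filter.Eventually.of_forall hFnn) hFInt ε₀
      rw [hFint_eq] at hmar
      have htoReal : (π {v | δ < ∏ i, A (v i)}).toReal ≤ γ ^ n / ε₀ := by
        have h1 : (π {v | δ < ∏ i, A (v i)}).toReal ≤ (π {v | ε₀ ≤ F v}).toReal :=
          ENNReal.toReal_mono (measure_ne_top _ _) (measure_mono hsub)
        have h2 : (π {v | ε₀ ≤ F v}).toReal ≤ γ ^ n / ε₀ := by
          rw [le_div_iff₀ hε₀pos, mul_comm]
          exact hmar
        linarith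
      calc π {v | δ < ∏ i, A (v i)}
          = ENNReal.ofReal ((π {v | δ < ∏ i, A (v i)}).toReal) :=
            (ENNReal.ofReal_toReal (measure_ne_top _ _)).symm
        _ ≤ ENNReal.ofReal (γ ^ n / ε₀) := ENNReal.ofReal_le_ofReal htoReal
    have hpow : Tendsto (fun n => ENNReal.ofReal (γ ^ n / ε₀)) atTop (𝓝 0) := by
      have hr : Tendsto (fun n => γ ^ n / ε₀) atTop (𝓝 0) := by
        have := (tendsto_pow_atTop_nhds_zero_of_lt_one hγ0 hγlt).div_const ε₀
        simpa using this
      have := ENNReal.tendsto_ofReal hr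
      simpa using this
    exact tendsto_of_tendsto_of_tendsto_of_le_of_le tendsto_const_nhds hpow
      (fun n => zero_le) hbound


lemma one_step {μ : Measure Ω} [IsProbabilityMeasure μ]
    {A B : Ω → ℝ} (hA : Measurable A) (hB : Measurable B)
    {ν : Measure ℝ} [IsProbabilityMeasure ν]
    (hsol : IsPerpetuitySolution μ A B ν)
    (g : ℝ → ℝ) (hg : Continuous g) (C₀ : ℝ) (hgb : ∀ x, |g x| ≤ C₀) :
    ∫ x, g x ∂ν = ∫ ω, ∫ m, g (A ω * m + B ω) ∂ν ∂μ := by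
  obtain ⟨Ω', mΩ', μ', hμ', A', B', M, hA', hB', hM, hmapAB, hmapM, hind, hiter⟩ := hsol
  haveI := hμ'
  set κ : Measure (ℝ × ℝ) := Measure.map (fun ω => (A ω, B ω)) μ with hκ
  haveI : IsProbabilityMeasure κ := Measure.isProbabilityMeasure_map (hA.prodMk hB).aemeasurable
  set G : ℝ × (ℝ × ℝ) → ℝ := fun p => g (p.2.1 * p.1 + p.2.2) with hG
  have hGmeas : Measurable G :=
    hg.measurable.comp
      (((measurable_fst.comp measurable_snd).mul measurable_fst).add
        (measurable_snd.comp measurable_snd))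
  have hprod : Measure.map (fun ω => (M ω, (A' ω, B' ω))) μ' = ν.prod κ := by
    rw [(indepFun_iff_map_prod_eq_prod_map_map hM.aemeasurable
      (hA'.prodMk hB').aemeasurable).mp hind, hmapM, hmapAB]
  have hGint : Integrable G (ν.prod κ) :=
    (integrable_const C₀).mono' hGmeas.aestronglyMeasurable
      (Filter.Eventually.of_forall fun p => by
        rw [Real.norm_eq_abs]; exact hgb _)
  calc ∫ x, g x ∂ν = ∫ x, g x ∂(Measure.map (fun ω => A' ω * M ω + B' ω) μ') := by rw [hiter]
    _ = ∫ ω, g (A' ω * M ω + B' ω) ∂μ' :=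
        integral_map ((hA'.mul hM).add hB').aemeasurable hg.measurable.aestronglyMeasurable
    _ = ∫ ω, G (M ω, (A' ω, B' ω)) ∂μ' := rfl
    _ = ∫ p, G p ∂(ν.prod κ) := by
        rw [← hprod]
        exact (integral_map (hM.prodMk (hA'.prodMk hB')).aemeasurable
          hGmeas.aestronglyMeasurable).symm
    _ = ∫ q, ∫ m, G (m, q) ∂ν ∂κ := integral_prod_symm G hGint
    _ = ∫ ω, ∫ m, G (m, (A ω, B ω)) ∂ν ∂μ := by
        rw [hκ]
        exact integral_map (hA.prodMk hB).aemeasurable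
          (hGmeas.stronglyMeasurable.integral_prod_left').aestronglyMeasurable
    _ = ∫ ω, ∫ m, g (A ω * m + B ω) ∂ν ∂μ := rfl

lemma integral_eq_of_solutions {μ : Measure Ω} [IsProbabilityMeasure μ]
    {A B : Ω → ℝ} (hA : Measurable A) (hB : Measurable B)
    (hA01 : ∀ ω, A ω ∈ Set.Ico (0:ℝ) 1)
    (hlogA : 0 < μ {ω | A ω = 0} ∨ ∫ ω, Real.log (A ω) ∂μ < 0)
    {ν₁ ν₂ : Measure ℝ} [IsProbabilityMeasure ν₁] [IsProbabilityMeasure ν₂]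
    (h₁ : IsPerpetuitySolution μ A B ν₁) (h₂ : IsPerpetuitySolution μ A B ν₂)
    (f : ℝ → ℝ) (L : ℝ≥0) (hfL : LipschitzWith L f) (hfb : ∀ x, |f x| ≤ 1) :
    ∫ x, f x ∂ν₁ = ∫ x, f x ∂ν₂ := by
  classical
  have hAnn : ∀ ω, 0 ≤ A ω := fun ω => (hA01 ω).1
  set D : (ℝ → ℝ) → ℝ := fun g => (∫ x, g x ∂ν₁) - ∫ x, g x ∂ν₂ with hD
  set S : ℝ → Set ℝ := fun r =>
    {d | ∃ g : ℝ → ℝ, (∀ x, |g x| ≤ 1) ∧ LipschitzWith (Real.toNNReal r) g ∧ d = |D g|}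
    with hS
  set H : ℝ → ℝ := fun r => sSup (S r) with hHdef
  -- integrability of bounded continuous functions
  have hint : ∀ (ν : Measure ℝ), IsProbabilityMeasure ν → ∀ (g : ℝ → ℝ), Continuous g →
      (∀ x, |g x| ≤ 1) → Integrable g ν := by
    intro ν hν g hc hb
    exact (integrable_const 1).mono' hc.measurable.aestronglyMeasurable
      (Filter.Eventually.of_forall fun x => by rw [Real.norm_eq_abs]; exact hb x)
  -- |D g| ≤ 2 for bounded g
  have hDb : ∀ g : ℝ → ℝ, (∀ x, |g x| ≤ 1) → |D g| ≤ 2 := by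
    intro g hb
    have e1 : ‖∫ x, g x ∂ν₁‖ ≤ 1 * (ν₁ Set.univ).toReal :=
      norm_integral_le_of_norm_le_const
        (Filter.Eventually.of_forall fun x => by rw [Real.norm_eq_abs]; exact hb x)
    have e2 : ‖∫ x, g x ∂ν₂‖ ≤ 1 * (ν₂ Set.univ).toReal :=
      norm_integral_le_of_norm_le_const
        (Filter.Eventually.of_forall fun x => by rw [Real.norm_eq_abs]; exact hb x)
    rw [measure_univ] at e1 e2
    simp only [ENNReal.toReal_one, mul_one] at e1 e2
    rw [Real.norm_eq_abs] at e1 e2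
    calc |D g| ≤ |∫ x, g x ∂ν₁| + |∫ x, g x ∂ν₂| := abs_sub _ _
      _ ≤ 2 := by linarith
  have hSne : ∀ r, (S r).Nonempty := by
    intro r
    refine ⟨|D fun _ => 0|, fun _ => 0, fun x => by norm_num, ?_, rfl⟩
    exact LipschitzWith.const' 0
  have hbdd : ∀ r, BddAbove (S r) := by
    rintro r
    refine ⟨2, ?_⟩
    rintro d ⟨g, hb, hl, rfl⟩
    exact hDb g hb
  have hmem : ∀ r (g : ℝ → ℝ), (∀ x, |g x| ≤ 1) → LipschitzWith (Real.toNNReal r) g →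
      |D g| ≤ H r := fun r g hb hl => le_csSup (hbdd r) ⟨g, hb, hl, rfl⟩
  have hHle2 : ∀ r, H r ≤ 2 := by
    intro r
    apply csSup_le (hSne r)
    rintro d ⟨g, hb, hl, rfl⟩
    exact hDb g hb
  have hH0 : ∀ r, 0 ≤ H r := by
    intro r
    refine le_trans (abs_nonneg (D fun _ => 0)) (le_csSup (hbdd r) ?_)
    exact ⟨fun _ => 0, fun x => by norm_num, LipschitzWith.const' 0, rfl⟩
  have hHabs : ∀ r, |H r| ≤ 2 := fun r => abs_le.mpr ⟨by linarith [hH0 r], hHle2 r⟩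
  have hHmono : Monotone H := by
    intro r r' hrr'
    apply csSup_le_csSup (hbdd r') (hSne r)
    rintro d ⟨g, hb, hl, rfl⟩
    exact ⟨g, hb, hl.weaken (Real.toNNReal_le_toNNReal hrr'), rfl⟩
  have hHmeas : Measurable H := hHmono.measurable
  -- the ψ functional
  set ψ : ℝ → ℝ := fun r => (∫ x, min (r * |x|) 2 ∂ν₁) + ∫ x, min (r * |x|) 2 ∂ν₂ with hψdef
  have hminmeas : ∀ r : ℝ, Measurable fun x : ℝ => min (r * |x|) 2 := fun r =>
    (measurable_abs.const_mul r).min measurable_const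
  have hminint : ∀ (r : ℝ), 0 ≤ r → ∀ (ν : Measure ℝ), IsProbabilityMeasure ν →
      Integrable (fun x : ℝ => min (r * |x|) 2) ν := by
    intro r hr ν hν
    refine (integrable_const 2).mono' (hminmeas r).aestronglyMeasurable
      (Filter.Eventually.of_forall fun x => ?_)
    rw [Real.norm_eq_abs, abs_of_nonneg (le_min (by positivity) (by norm_num))]
    exact min_le_right _ _
  have hψnn : ∀ r, 0 ≤ r → 0 ≤ ψ r := by
    intro r hr
    have i1 : 0 ≤ ∫ x, min (r * |x|) 2 ∂ν₁ :=
      integral_nonneg fun x => le_min (by positivity) (by norm_num)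
    have i2 : 0 ≤ ∫ x, min (r * |x|) 2 ∂ν₂ :=
      integral_nonneg fun x => le_min (by positivity) (by norm_num)
    rw [hψdef]; dsimp only; linarith
  have hHψ : ∀ r, 0 ≤ r → H r ≤ ψ r := by
    intro r hr
    apply csSup_le (hSne r)
    rintro d ⟨g, hb, hl, rfl⟩
    have hgc : Continuous g := hl.continuous
    have hg1 : Integrable g ν₁ := hint ν₁ inferInstance g hgc hb
    have hg2 : Integrable g ν₂ := hint ν₂ inferInstance g hgc hb
    have hsub1 : ∫ x, (g x - g 0) ∂ν₁ = (∫ x, g x ∂ν₁) - g 0 := by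
      rw [integral_sub hg1 (integrable_const _), integral_const]
      simp [measure_univ]
    have hsub2 : ∫ x, (g x - g 0) ∂ν₂ = (∫ x, g x ∂ν₂) - g 0 := by
      rw [integral_sub hg2 (integrable_const _), integral_const]
      simp [measure_univ]
    have hDeq : D g = (∫ x, (g x - g 0) ∂ν₁) - ∫ x, (g x - g 0) ∂ν₂ := by
      rw [hsub1, hsub2, hD]; ring
    have hptw : ∀ x : ℝ, |g x - g 0| ≤ min (r * |x|) 2 := by
      intro x
      refine le_min ?_ ?_
      · have := hl.dist_le_mul x 0
        rw [Real.dist_eq, Real.dist_eq, sub_zero, Real.coe_toNNReal _ hr] at this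
        exact this
      · calc |g x - g 0| ≤ |g x| + |g 0| := abs_sub _ _
          _ ≤ 2 := by linarith [hb x, hb 0]
    have habsgen : ∀ (ν : Measure ℝ), IsProbabilityMeasure ν → Integrable g ν →
        |∫ x, (g x - g 0) ∂ν| ≤ ∫ x, min (r * |x|) 2 ∂ν := by
      intro ν hν hgi
      have hgs : Integrable (fun x => g x - g 0) ν := by
        exact hgi.sub (integrable_const (g 0))
      have hgsabs : Integrable (fun x => |g x - g 0|) ν := by exact hgs.abs
      have e1 : |∫ x, (g x - g 0) ∂ν| ≤ ∫ x, |g x - g 0| ∂ν := by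
        rw [← Real.norm_eq_abs]
        refine le_trans (norm_integral_le_integral_norm _) (le_of_eq ?_)
        apply integral_congr_ae
        exact Filter.Eventually.of_forall fun x => Real.norm_eq_abs _
      have e2 : ∫ x, |g x - g 0| ∂ν ≤ ∫ x, min (r * |x|) 2 ∂ν :=
        integral_mono hgsabs (hminint r hr ν hν) hptw
      linarith
    have habs1 := habsgen ν₁ inferInstance hg1
    have habs2 := habsgen ν₂ inferInstance hg2
    calc |D g| ≤ |∫ x, (g x - g 0) ∂ν₁| + |∫ x, (g x - g 0) ∂ν₂| := by
          rw [hDeq]; exact abs_sub _ _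
      _ ≤ ψ r := by rw [hψdef]; dsimp only; linarith
  -- the one-step inequality
  have hstep : ∀ r : ℝ, 0 ≤ r → H r ≤ ∫ ω, H (r * A ω) ∂μ := by
    intro r hr
    apply csSup_le (hSne r)
    rintro d ⟨g, hb, hl, rfl⟩
    have hgc : Continuous g := hl.continuous
    have hone1 : ∫ x, g x ∂ν₁ = ∫ ω, ∫ m, g (A ω * m + B ω) ∂ν₁ ∂μ :=
      one_step hA hB h₁ g hgc 1 hb
    have hone2 : ∫ x, g x ∂ν₂ = ∫ ω, ∫ m, g (A ω * m + B ω) ∂ν₂ ∂μ :=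
      one_step hA hB h₂ g hgc 1 hb
    set I₁ : Ω → ℝ := fun ω => ∫ m, g (A ω * m + B ω) ∂ν₁ with hI₁
    set I₂ : Ω → ℝ := fun ω => ∫ m, g (A ω * m + B ω) ∂ν₂ with hI₂
    have hFmeas : Measurable fun p : Ω × ℝ => g (A p.1 * p.2 + B p.1) :=
      hgc.measurable.comp (((hA.comp measurable_fst).mul measurable_snd).add
        (hB.comp measurable_fst))
    have hI₁sm : StronglyMeasurable I₁ :=
      hFmeas.stronglyMeasurable.integral_prod_right'
    have hI₂sm : StronglyMeasurable I₂ :=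
      hFmeas.stronglyMeasurable.integral_prod_right'
    have hIb : ∀ (ν : Measure ℝ), IsProbabilityMeasure ν → ∀ ω : Ω,
        |∫ m, g (A ω * m + B ω) ∂ν| ≤ 1 := by
      intro ν hν ω
      have := norm_integral_le_of_norm_le_const (μ := ν)
        (f := fun m => g (A ω * m + B ω)) (C := 1)
        (Filter.Eventually.of_forall fun m => by rw [Real.norm_eq_abs]; exact hb _)
      rw [probReal_univ] at this
      simpa [Real.norm_eq_abs] using this
    have hI₁int : Integrable I₁ μ :=
      (integrable_const 1).mono' hI₁sm.aestronglyMeasurable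
        (Filter.Eventually.of_forall fun ω => by
          rw [Real.norm_eq_abs]; exact hIb ν₁ inferInstance ω)
    have hI₂int : Integrable I₂ μ :=
      (integrable_const 1).mono' hI₂sm.aestronglyMeasurable
        (Filter.Eventually.of_forall fun ω => by
          rw [Real.norm_eq_abs]; exact hIb ν₂ inferInstance ω)
    have hDeq : D g = ∫ ω, (I₁ ω - I₂ ω) ∂μ := by
      rw [hD]; dsimp only
      rw [hone1, hone2, integral_sub hI₁int hI₂int]
    have haff : ∀ ω, LipschitzWith (Real.toNNReal (A ω)) (fun m => A ω * m + B ω) := by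
      intro ω
      apply LipschitzWith.of_dist_le_mul
      intro x y
      rw [Real.dist_eq, Real.dist_eq, Real.coe_toNNReal _ (hAnn ω)]
      have he : A ω * x + B ω - (A ω * y + B ω) = A ω * (x - y) := by ring
      rw [he, abs_mul, abs_of_nonneg (hAnn ω)]
    have hptw : ∀ ω, |I₁ ω - I₂ ω| ≤ H (r * A ω) := by
      intro ω
      have hcomp : LipschitzWith (Real.toNNReal (r * A ω)) (fun m => g (A ω * m + B ω)) := by
        rw [Real.toNNReal_mul hr]
        exact hl.comp (haff ω)
      exact hmem (r * A ω) _ (fun m => hb _) hcomp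
    have hHint : Integrable (fun ω => H (r * A ω)) μ :=
      (integrable_const 2).mono' (hHmeas.comp (hA.const_mul r)).aestronglyMeasurable
        (Filter.Eventually.of_forall fun ω => by rw [Real.norm_eq_abs]; exact hHabs _)
    calc |D g| = |∫ ω, (I₁ ω - I₂ ω) ∂μ| := by rw [hDeq]
      _ ≤ ∫ ω, |I₁ ω - I₂ ω| ∂μ := by
          rw [← Real.norm_eq_abs]
          refine le_trans (norm_integral_le_integral_norm _) ?_
          apply le_of_eq
          apply integral_congr_ae
          exact Filter.Eventually.of_forall fun ω => Real.norm_eq_abs _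
      _ ≤ ∫ ω, H (r * A ω) ∂μ :=
          integral_mono (hI₁int.sub hI₂int).abs hHint hptw
  -- iteration over finite products
  set u : ℕ → ℝ := fun n =>
    ∫ v : Fin n → Ω, H ((L:ℝ) * ∏ i, A (v i)) ∂(Measure.pi fun _ => μ) with hu
  have hprodmeas : ∀ n, Measurable fun v : Fin n → Ω => ∏ i, A (v i) := fun n =>
    Finset.measurable_prod _ fun i _ => hA.comp (measurable_pi_apply i)
  have hprodnn : ∀ n (v : Fin n → Ω), (0:ℝ) ≤ ∏ i, A (v i) := fun n v =>
    Finset.prod_nonneg fun i _ => hAnn _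
  have huint : ∀ n, Integrable (fun v : Fin n → Ω => H ((L:ℝ) * ∏ i, A (v i)))
      (Measure.pi fun _ => μ) := by
    intro n
    exact (integrable_const 2).mono'
      ((hHmeas.comp ((hprodmeas n).const_mul _)).aestronglyMeasurable)
      (Filter.Eventually.of_forall fun v => by rw [Real.norm_eq_abs]; exact hHabs _)
  have hu0 : u 0 = H (L:ℝ) := by
    rw [hu]
    simp
  have hustep : ∀ n, u n ≤ u (n + 1) := by
    intro n
    have hmp := (measurePreserving_piFinSuccAbove (fun _ : Fin (n+1) => μ) 0).symm
    have hins : ∀ y : Ω × (Fin n → Ω),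
        (∏ i, A ((MeasurableEquiv.piFinSuccAbove (fun _ : Fin (n+1) => Ω) 0).symm y i))
          = A y.1 * ∏ i, A (y.2 i) := by
      intro y
      simp only [MeasurableEquiv.piFinSuccAbove_symm_apply, Fin.insertNthEquiv,
        Equiv.coe_fn_mk, Fin.insertNth_zero]
      rw [Fin.prod_univ_succ]
      simp [Fin.cons_zero, Fin.cons_succ]
    have hrw : u (n+1) = ∫ y : Ω × (Fin n → Ω),
        H ((L:ℝ) * (A y.1 * ∏ i, A (y.2 i)))
          ∂(μ.prod (Measure.pi fun _ : Fin n => μ)) := by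
      rw [hu]
      dsimp only
      rw [← hmp.integral_comp']
      apply integral_congr_ae
      exact Filter.Eventually.of_forall fun y => by dsimp only; rw [hins y]
    have hFi : Integrable (fun y : Ω × (Fin n → Ω) =>
        H ((L:ℝ) * (A y.1 * ∏ i, A (y.2 i)))) (μ.prod (Measure.pi fun _ : Fin n => μ)) := by
      have hm : Measurable fun y : Ω × (Fin n → Ω) =>
          H ((L:ℝ) * (A y.1 * ∏ i, A (y.2 i))) :=
        hHmeas.comp (((hA.comp measurable_fst).mul
          ((hprodmeas n).comp measurable_snd)).const_mul _)
      exact (integrable_const 2).mono' hm.aestronglyMeasurable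
        (Filter.Eventually.of_forall fun y => by rw [Real.norm_eq_abs]; exact hHabs _)
    rw [hrw, integral_prod_symm _ hFi]
    rw [hu]
    dsimp only
    have hrint : Integrable (fun w : Fin n → Ω =>
        ∫ a, H ((L:ℝ) * (A a * ∏ i, A (w i))) ∂μ) (Measure.pi fun _ : Fin n => μ) := by
      have hm : Measurable fun y : Ω × (Fin n → Ω) =>
          H ((L:ℝ) * (A y.1 * ∏ i, A (y.2 i))) :=
        hHmeas.comp (((hA.comp measurable_fst).mul
          ((hprodmeas n).comp measurable_snd)).const_mul _)
      refine (integrable_const 2).mono'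
        (hm.stronglyMeasurable.integral_prod_left').aestronglyMeasurable
        (Filter.Eventually.of_forall fun w => ?_)
      have := norm_integral_le_of_norm_le_const (μ := μ)
        (f := fun a => H ((L:ℝ) * (A a * ∏ i, A (w i)))) (C := 2)
        (Filter.Eventually.of_forall fun a => by rw [Real.norm_eq_abs]; exact hHabs _)
      rw [probReal_univ] at this
      simpa using this
    refine integral_mono (huint n) hrint ?_
    intro w
    have h0 : (0:ℝ) ≤ (L:ℝ) * ∏ i, A (w i) := mul_nonneg L.coe_nonneg (hprodnn n w)
    calc H ((L:ℝ) * ∏ i, A (w i)) ≤ ∫ a, H (((L:ℝ) * ∏ i, A (w i)) * A a) ∂μ := hstep _ h0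
      _ = ∫ a, H ((L:ℝ) * (A a * ∏ i, A (w i))) ∂μ := by
          apply integral_congr_ae
          refine Filter.Eventually.of_forall fun a => ?_
          congr 1
          ring
  have hchain : ∀ n, H (L:ℝ) ≤ u n := by
    intro n
    calc H (L:ℝ) = u 0 := hu0.symm
      _ ≤ u n := (monotone_nat_of_le_succ hustep) (Nat.zero_le n)
  -- ψ tends to zero along L/(k+1)
  have hdct : ∀ (ν : Measure ℝ), IsProbabilityMeasure ν →
      Tendsto (fun k : ℕ => ∫ x, min ((L:ℝ)/((k:ℝ)+1) * |x|) 2 ∂ν) atTop (𝓝 0) := by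
    intro ν hν
    have h0 : (0:ℝ) = ∫ x, (0:ℝ) ∂ν := by simp
    rw [h0]
    refine tendsto_integral_of_dominated_convergence (fun _ => 2)
      (fun k => (hminmeas _).aestronglyMeasurable)
      (integrable_const 2)
      (fun k => Filter.Eventually.of_forall fun x => ?_)
      (Filter.Eventually.of_forall fun x => ?_)
    · rw [Real.norm_eq_abs, abs_of_nonneg (le_min (by positivity) (by norm_num))]
      exact min_le_right _ _
    · have hb : Tendsto (fun k : ℕ => (L:ℝ) * |x| * (1/((k:ℝ)+1))) atTop (𝓝 0) := by
        have := tendsto_one_div_add_atTop_nhds_zero_nat.const_mul ((L:ℝ) * |x|)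
        simpa using this
      refine squeeze_zero (fun k => le_min (by positivity) (by norm_num)) (fun k => ?_) hb
      calc min ((L:ℝ)/((k:ℝ)+1) * |x|) 2 ≤ (L:ℝ)/((k:ℝ)+1) * |x| := min_le_left _ _
        _ = (L:ℝ) * |x| * (1/((k:ℝ)+1)) := by ring
  have hψ0 : Tendsto (fun k : ℕ => ψ ((L:ℝ)/((k:ℝ)+1))) atTop (𝓝 0) := by
    rw [hψdef]
    have := (hdct ν₁ inferInstance).add (hdct ν₂ inferInstance)
    simpa using this
  -- final bound
  have hfinal : ∀ ε : ℝ, 0 < ε → H (L:ℝ) ≤ ε := by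
    intro ε hε
    obtain ⟨k, hk⟩ := (hψ0.eventually_lt_const (show (0:ℝ) < ε/2 by linarith)).exists
    set δ : ℝ := 1/((k:ℝ)+1) with hδdef
    have hδpos : 0 < δ := by positivity
    have hLδ : (L:ℝ) * δ = (L:ℝ)/((k:ℝ)+1) := by rw [hδdef]; ring
    have hT := tendsto_pi_prod_measure μ A hA hA01 hlogA hδpos
    have hTr : Tendsto (fun n =>
        ((Measure.pi fun _ : Fin n => μ) {v | δ < ∏ i, A (v i)}).toReal) atTop (𝓝 0) := by
      have := (ENNReal.tendsto_toReal (by simp : (0:ℝ≥0∞) ≠ ⊤)).comp hT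
      simpa [Function.comp_def] using this
    have hTr2 : Tendsto (fun n =>
        2 * ((Measure.pi fun _ : Fin n => μ) {v | δ < ∏ i, A (v i)}).toReal) atTop (𝓝 0) := by
      have := hTr.const_mul (2:ℝ)
      simpa using this
    obtain ⟨n, hn⟩ := (hTr2.eventually_lt_const (show (0:ℝ) < ε/2 by linarith)).exists
    have hEmeas : MeasurableSet {v : Fin n → Ω | δ < ∏ i, A (v i)} :=
      measurableSet_lt measurable_const (hprodmeas n)
    have hub : u n ≤ ψ ((L:ℝ)*δ) +
        2 * ((Measure.pi fun _ : Fin n => μ) {v | δ < ∏ i, A (v i)}).toReal := by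
      have hle : ∀ v : Fin n → Ω, H ((L:ℝ) * ∏ i, A (v i)) ≤
          ψ ((L:ℝ)*δ) +
            Set.indicator {v : Fin n → Ω | δ < ∏ i, A (v i)} (fun _ => 2) v := by
        intro v
        by_cases hv : δ < ∏ i, A (v i)
        · rw [Set.indicator_of_mem
            (show v ∈ {v : Fin n → Ω | δ < ∏ i, A (v i)} from hv)]
          have := hψnn ((L:ℝ)*δ) (by positivity)
          linarith [hHle2 ((L:ℝ) * ∏ i, A (v i))]
        · rw [Set.indicator_of_notMem
            (show v ∉ {v : Fin n → Ω | δ < ∏ i, A (v i)} from hv)]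
          push_neg at hv
          have hle1 : H ((L:ℝ) * ∏ i, A (v i)) ≤ H ((L:ℝ)*δ) :=
            hHmono (mul_le_mul_of_nonneg_left hv L.coe_nonneg)
          have hle2 := hHψ ((L:ℝ)*δ) (by positivity)
          linarith
      have hri : Integrable (fun v : Fin n → Ω => ψ ((L:ℝ)*δ) +
          Set.indicator {v : Fin n → Ω | δ < ∏ i, A (v i)} (fun _ => 2) v)
          (Measure.pi fun _ => μ) :=
        (integrable_const _).add ((integrable_const (2:ℝ)).indicator hEmeas)
      calc u n ≤ ∫ v : Fin n → Ω, (ψ ((L:ℝ)*δ) +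
            Set.indicator {v : Fin n → Ω | δ < ∏ i, A (v i)} (fun _ => 2) v)
            ∂(Measure.pi fun _ => μ) := by
            rw [hu]; exact integral_mono (huint n) hri hle
        _ = ψ ((L:ℝ)*δ) +
            2 * ((Measure.pi fun _ : Fin n => μ) {v | δ < ∏ i, A (v i)}).toReal := by
            rw [integral_add (integrable_const _) ((integrable_const (2:ℝ)).indicator hEmeas),
              integral_const, integral_indicator_const _ hEmeas]
            simp [measure_univ, mul_comm, Measure.real]
    calc H (L:ℝ) ≤ u n := hchain n
      _ ≤ ψ ((L:ℝ)*δ) +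
          2 * ((Measure.pi fun _ : Fin n => μ) {v | δ < ∏ i, A (v i)}).toReal := hub
      _ ≤ ε/2 + ε/2 := by
          rw [hLδ]
          exact add_le_add hk.le hn.le
      _ = ε := by ring
  have hHzero : H (L:ℝ) ≤ 0 := by
    by_contra hpos
    push_neg at hpos
    have := hfinal ((H (L:ℝ))/2) (by linarith)
    linarith
  have hfL' : LipschitzWith (Real.toNNReal (L:ℝ)) f := by
    rw [Real.toNNReal_coe]
    exact hfL
  have hDf : |D f| ≤ 0 := le_trans (hmem (L:ℝ) f hfb hfL') hHzero
  have : D f = 0 := abs_eq_zero.mp (le_antisymm hDf (abs_nonneg _))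
  rw [hD] at this
  dsimp only at this
  linarith

lemma Iic_le_of_integral_eq {ν₁ ν₂ : Measure ℝ} [IsProbabilityMeasure ν₁]
    [IsProbabilityMeasure ν₂]
    (h : ∀ (g : ℝ → ℝ) (Lg : ℝ≥0), LipschitzWith Lg g → (∀ x, |g x| ≤ 1) →
      ∫ x, g x ∂ν₁ = ∫ x, g x ∂ν₂) (t : ℝ) :
    ν₁ (Set.Iic t) ≤ ν₂ (Set.Iic t) := by
  have key : ∀ k : ℕ, (ν₁ (Set.Iic t)).toReal ≤ (ν₂ (Set.Iic (t + 1/((k:ℝ)+1)))).toReal := by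
    intro k
    set c : ℝ := (k:ℝ) + 1 with hc
    have hcpos : (0:ℝ) < c := by positivity
    set g : ℝ → ℝ := fun x => max 0 (min 1 (1 - c * (x - t))) with hg
    have hgb : ∀ x, |g x| ≤ 1 := by
      intro x
      rw [abs_le]
      constructor
      · exact le_trans (by norm_num) (le_max_left _ _)
      · exact max_le zero_le_one (min_le_left _ _)
    have hbase : LipschitzWith (⟨c, hcpos.le⟩ : ℝ≥0) (fun x => 1 - c * (x - t)) := by
      apply LipschitzWith.of_dist_le_mul
      intro x y
      rw [Real.dist_eq, Real.dist_eq]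
      have he : 1 - c * (x - t) - (1 - c * (y - t)) = -(c * (x - y)) := by ring
      rw [he, abs_neg, abs_mul, abs_of_nonneg hcpos.le]
      exact le_of_eq rfl
    have hLip : LipschitzWith (⟨c, hcpos.le⟩ : ℝ≥0) g := (hbase.const_min 1).const_max 0
    have heq := h g _ hLip hgb
    have hgint1 : Integrable g ν₁ :=
      (integrable_const 1).mono' hLip.continuous.measurable.aestronglyMeasurable
        (Filter.Eventually.of_forall fun x => by rw [Real.norm_eq_abs]; exact hgb x)
    have hgint2 : Integrable g ν₂ :=
      (integrable_const 1).mono' hLip.continuous.measurable.aestronglyMeasurable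
        (Filter.Eventually.of_forall fun x => by rw [Real.norm_eq_abs]; exact hgb x)
    have hlow : (ν₁ (Set.Iic t)).toReal ≤ ∫ x, g x ∂ν₁ := by
      have hind : ∫ x, Set.indicator (Set.Iic t) (fun _ => (1:ℝ)) x ∂ν₁
          = (ν₁ (Set.Iic t)).toReal := by
        rw [integral_indicator_const _ measurableSet_Iic]; simp [Measure.real]
      rw [← hind]
      refine integral_mono ((integrable_const (1:ℝ)).indicator measurableSet_Iic) hgint1 ?_
      intro x
      by_cases hx : x ≤ t
      · rw [Set.indicator_of_mem (show x ∈ Set.Iic t from hx)]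
        have h1 : (1:ℝ) ≤ 1 - c * (x - t) := by
          nlinarith [mul_nonneg hcpos.le (sub_nonneg.mpr hx)]
        rw [hg]
        dsimp only
        rw [min_eq_left h1]
        simp
      · rw [Set.indicator_of_notMem (show x ∉ Set.Iic t from hx)]
        exact le_max_left _ _
    have hupp : ∫ x, g x ∂ν₂ ≤ (ν₂ (Set.Iic (t + 1/c))).toReal := by
      have hind : ∫ x, Set.indicator (Set.Iic (t + 1/c)) (fun _ => (1:ℝ)) x ∂ν₂
          = (ν₂ (Set.Iic (t + 1/c))).toReal := by
        rw [integral_indicator_const _ measurableSet_Iic]; simp [Measure.real]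
      rw [← hind]
      refine integral_mono hgint2 ((integrable_const (1:ℝ)).indicator measurableSet_Iic) ?_
      intro x
      by_cases hx : x ≤ t + 1/c
      · rw [Set.indicator_of_mem (show x ∈ Set.Iic (t + 1/c) from hx)]
        exact max_le zero_le_one (min_le_left _ _)
      · rw [Set.indicator_of_notMem (show x ∉ Set.Iic (t + 1/c) from hx)]
        push_neg at hx
        have h2 : 1 - c * (x - t) < 0 := by
          have hlt : 1/c < x - t := by linarith
          have := (div_lt_iff₀ hcpos).mp hlt
          nlinarith
        have hmin : min 1 (1 - c * (x - t)) ≤ 0 := le_trans (min_le_right _ _) h2.le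
        rw [hg]
        dsimp only
        exact le_of_eq (max_eq_left hmin)
    calc (ν₁ (Set.Iic t)).toReal ≤ ∫ x, g x ∂ν₁ := hlow
      _ = ∫ x, g x ∂ν₂ := heq
      _ ≤ (ν₂ (Set.Iic (t + 1/c))).toReal := hupp
  have hanti : Antitone fun k : ℕ => Set.Iic (t + 1/((k:ℝ)+1)) := by
    intro a b hab
    apply Set.Iic_subset_Iic.mpr
    have h1 : ((a:ℝ)+1) ≤ ((b:ℝ)+1) := by exact_mod_cast Nat.succ_le_succ hab
    have := one_div_le_one_div_of_le (by positivity) h1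
    linarith
  have hiInter : (⋂ k : ℕ, Set.Iic (t + 1/((k:ℝ)+1))) = Set.Iic t := by
    ext x
    simp only [Set.mem_iInter, Set.mem_Iic]
    constructor
    · intro hx
      by_contra hgt
      push_neg at hgt
      obtain ⟨k, hk⟩ := exists_nat_one_div_lt (sub_pos.mpr hgt)
      have := hx k
      linarith
    · intro hx k
      have : (0:ℝ) ≤ 1/((k:ℝ)+1) := by positivity
      linarith
  have hlim : Tendsto (fun k : ℕ => ν₂ (Set.Iic (t + 1/((k:ℝ)+1)))) atTop
      (𝓝 (ν₂ (Set.Iic t))) := by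
    have := tendsto_measure_iInter_atTop (μ := ν₂)
      (fun k => measurableSet_Iic.nullMeasurableSet) hanti ⟨0, measure_ne_top _ _⟩
    rw [hiInter] at this
    exact this
  have hlimr : Tendsto (fun k : ℕ => (ν₂ (Set.Iic (t + 1/((k:ℝ)+1)))).toReal) atTop
      (𝓝 ((ν₂ (Set.Iic t)).toReal)) :=
    (ENNReal.tendsto_toReal (measure_ne_top _ _)).comp hlim
  have hfinal : (ν₁ (Set.Iic t)).toReal ≤ (ν₂ (Set.Iic t)).toReal :=
    ge_of_tendsto' hlimr key
  exact (ENNReal.toReal_le_toReal (measure_ne_top _ _) (measure_ne_top _ _)).mp hfinal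

end PerpetuityAux

/-- Uniqueness for perpetuities: if `A ∈ [0,1)`, `P(A = 1) < 1`, `E[log A] < 0`
(with `log 0 = -∞`, i.e. either `P(A=0) > 0` or the integral of `log A` is negative), and
`E[log⁺ |B|] < ∞`, then the equation `M =_d A M + B`, with `M` independent of `(A,B)`,
has at most one solution in distribution. -/
theorem perpetuity_unique_solution
    {Ω : Type*} [MeasurableSpace Ω] (μ : Measure Ω) [IsProbabilityMeasure μ]
    (A B : Ω → ℝ) (hA : Measurable A) (hB : Measurable B)
    (hA01 : ∀ ω, A ω ∈ Set.Ico (0 : ℝ) 1)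
    (hA1 : μ {ω | A ω = 1} < 1)
    (hlogA : 0 < μ {ω | A ω = 0} ∨ ∫ ω, Real.log (A ω) ∂μ < 0)
    (hlogB : ∫⁻ ω, ENNReal.ofReal (Real.log (max |B ω| 1)) ∂μ < ∞) :
    ∀ ν₁ ν₂ : Measure ℝ, IsProbabilityMeasure ν₁ → IsProbabilityMeasure ν₂ →
      IsPerpetuitySolution μ A B ν₁ → IsPerpetuitySolution μ A B ν₂ → ν₁ = ν₂ := by
  intro ν₁ ν₂ hν₁ hν₂ h₁ h₂
  haveI := hν₁
  haveI := hν₂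
  have hkey : ∀ (g : ℝ → ℝ) (Lg : ℝ≥0), LipschitzWith Lg g → (∀ x, |g x| ≤ 1) →
      ∫ x, g x ∂ν₁ = ∫ x, g x ∂ν₂ := fun g Lg hl hb =>
    PerpetuityAux.integral_eq_of_solutions hA hB hA01 hlogA h₁ h₂ g Lg hl hb
  have hkey' : ∀ (g : ℝ → ℝ) (Lg : ℝ≥0), LipschitzWith Lg g → (∀ x, |g x| ≤ 1) →
      ∫ x, g x ∂ν₂ = ∫ x, g x ∂ν₁ := fun g Lg hl hb => (hkey g Lg hl hb).symm
  refine MeasureTheory.Measure.ext_of_Iic ν₁ ν₂ fun t => ?_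
  exact le_antisymm (PerpetuityAux.Iic_le_of_integral_eq hkey t)
    (PerpetuityAux.Iic_le_of_integral_eq hkey' t)
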